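/- Let X be a bounded metric space, m a cardinal with 1 < m ≤ #X, and λ a real number with λ ≥ diam X + α_m(X) and λ > 0. Then 2·d_GH(λΔ_m, X) = λ − α_m(X). -/

import Mathlib

open Metric Set
open scoped ENNReal

/-- A correspondence between `X` and `Y`: a relation whose projections are surjective. -/
def IsCorrespondence {X Y : Type*} (R : Set (X × Y)) : Prop :=
  (∀ x : X, ∃ y : Y, (x, y) ∈ R) ∧ (∀ y : Y, ∃ x : X, (x, y) ∈ R)

/-- The distortion of a relation `R ⊆ X × Y`. -/
noncomputable def corrDistortion {X Y : Type*} [MetricSpace X] [MetricSpace Y]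
    (R : Set (X × Y)) : ℝ≥0∞ :=
  ⨆ p ∈ R, ⨆ q ∈ R, ENNReal.ofReal |dist p.1 q.1 - dist p.2 q.2|

/-- The Gromov–Hausdorff distance between (arbitrary) metric spaces:
half the infimum of distortions of correspondences. -/
noncomputable def ghDist (X Y : Type*) [MetricSpace X] [MetricSpace Y] : ℝ≥0∞ :=
  (⨅ (R : Set (X × Y)) (_ : IsCorrespondence R), corrDistortion R) / 2

/-- `alphaSup I X` is `α_m(X)` for `m = #I`: the supremum, over all partitions of `X`
into nonempty subsets indexed by `I`, of the infimum of distances between distinct parts. -/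
noncomputable def alphaSup (I : Type v) (X : Type u) [MetricSpace X] : ℝ≥0∞ :=
  ⨆ D ∈ {D : I → Set X |
      (∀ i, (D i).Nonempty) ∧ (⋃ i, D i = Set.univ) ∧ Pairwise (Function.onFun Disjoint D)},
    ⨅ (i : I) (j : I) (_ : i ≠ j), ⨅ x ∈ D i, ⨅ y ∈ D j, edist x y

theorem le_corrDist {S X : Type*} [MetricSpace S] [MetricSpace X] {R : Set (S × X)}
    {p q : S × X} (hp : p ∈ R) (hq : q ∈ R) :
    ENNReal.ofReal |dist p.1 q.1 - dist p.2 q.2| ≤ corrDistortion R :=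
  le_iSup₂_of_le p hp (le_iSup₂_of_le q hq le_rfl)

theorem corrDist_le {S X : Type*} [MetricSpace S] [MetricSpace X] {R : Set (S × X)}
    {c : ℝ≥0∞}
    (h : ∀ p ∈ R, ∀ q ∈ R, ENNReal.ofReal |dist p.1 q.1 - dist p.2 q.2| ≤ c) :
    corrDistortion R ≤ c :=
  iSup₂_le fun p hp => iSup₂_le fun q hq => h p hp q hq

/-- for a bounded metric space `X`, a simplex `λΔ_m` (here: a metric space
`S` of cardinality `m`, `1 < m ≤ #X`, all of whose nonzero distances equal `λ`), and
`λ ≥ diam X + α_m(X)`, `λ > 0`, one has `2·d_GH(λΔ_m, X) = λ − α_m(X)`. -/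
theorem stmt13 {X S : Type u} [MetricSpace X] [Nonempty X] [MetricSpace S]
    (hXb : EMetric.diam (Set.univ : Set X) ≠ ⊤)
    (lam : ℝ) (hlam : 0 < lam)
    (hS : ∀ p q : S, p ≠ q → dist p q = lam)
    (hS1 : 1 < Cardinal.mk S) (hSX : Cardinal.mk S ≤ Cardinal.mk X)
    (hge : ENNReal.ofReal (Metric.diam (Set.univ : Set X)) + alphaSup S X
        ≤ ENNReal.ofReal lam) :
    2 * ghDist S X = ENNReal.ofReal lam - alphaSup S X := by
  classical
  have _inst : Nontrivial S := Cardinal.one_lt_iff_nontrivial.mp hS1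
  set P : Set (S → Set X) := {D : S → Set X |
      (∀ i, (D i).Nonempty) ∧ (⋃ i, D i = Set.univ) ∧ Pairwise (Function.onFun Disjoint D)} with hPdef
  set β : (S → Set X) → ℝ≥0∞ := fun D =>
      ⨅ (i : S) (j : S) (_ : i ≠ j), ⨅ x ∈ D i, ⨅ y ∈ D j, edist x y with hβdef
  have hA : alphaSup S X = ⨆ D ∈ P, β D := rfl
  set L : ℝ≥0∞ := ENNReal.ofReal lam with hLdef
  have hLne : L ≠ ⊤ := ENNReal.ofReal_ne_top
  have hAle : alphaSup S X ≤ L := le_trans le_add_self hge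
  have hAne : alphaSup S X ≠ ⊤ := fun h => hLne (top_le_iff.mp (h ▸ hAle))
  have hdiam_le : ENNReal.ofReal (Metric.diam (univ : Set X)) ≤ L :=
    le_trans (self_le_add_right _ _) hge
  have hediam : EMetric.diam (univ : Set X) = ENNReal.ofReal (Metric.diam (univ : Set X)) := by
    rw [Metric.diam]; exact (ENNReal.ofReal_toReal hXb).symm
  have hedist_le : ∀ x y : X, edist x y ≤ EMetric.diam (univ : Set X) := fun x y =>
    EMetric.edist_le_diam_of_mem (mem_univ x) (mem_univ y)
  have hedistL : ∀ x y : X, edist x y ≤ L := fun x y =>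
    (hedist_le x y).trans (hediam ▸ hdiam_le)
  have hdist_le : ∀ x y : X, dist x y ≤ lam := fun x y => by
    have h := hedistL x y
    rw [edist_dist] at h
    exact (ENNReal.ofReal_le_ofReal_iff hlam.le).mp h
  -- β D ≤ edist x y for x ∈ D i, y ∈ D j, i ≠ j
  have hβle : ∀ (D : S → Set X) (i j : S), i ≠ j → ∀ x ∈ D i, ∀ y ∈ D j,
      β D ≤ edist x y := by
    intro D i j hij x hx y hy
    calc β D ≤ ⨅ (_ : i ≠ j), ⨅ x ∈ D i, ⨅ y ∈ D j, edist x y :=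
          (iInf_le _ i).trans (iInf_le _ j)
      _ ≤ ⨅ x ∈ D i, ⨅ y ∈ D j, edist x y := iInf_le _ hij
      _ ≤ ⨅ y ∈ D j, edist x y := iInf₂_le x hx
      _ ≤ edist x y := iInf₂_le y hy
  -- a partition exists
  obtain ⟨f⟩ := (Cardinal.le_def S X).mp hSX
  obtain ⟨s₀, s₁, hs01⟩ := exists_pair_ne S
  have hP0 : (fun s => if s = s₀ then (Set.range f)ᶜ ∪ {f s₀} else {f s}) ∈ P := by
    refine ⟨fun s => ?_, ?_, ?_⟩
    · by_cases h : s = s₀ <;> simp [h]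
    · apply Set.eq_univ_of_forall
      intro x
      by_cases hx : x ∈ Set.range f
      · obtain ⟨s, rfl⟩ := hx
        by_cases h : s = s₀
        · exact Set.mem_iUnion.mpr ⟨s₀, by simp [h]⟩
        · exact Set.mem_iUnion.mpr ⟨s, by simp [h]⟩
      · exact Set.mem_iUnion.mpr ⟨s₀, by simp [hx]⟩
    · intro s s' hss
      rw [Function.onFun, Set.disjoint_left]
      intro x hx hx'
      by_cases h : s = s₀
      · have h' : s' ≠ s₀ := fun hh => hss (h.trans hh.symm)
        rw [if_pos h] at hx
        rw [if_neg h'] at hx'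
        rcases hx with hx | hx
        · exact hx (hx' ▸ Set.mem_range_self s')
        · rw [Set.mem_singleton_iff] at hx hx'
          exact h' (f.injective (hx'.symm ▸ hx : f s' = f s₀))
      · rw [if_neg h] at hx
        by_cases h' : s' = s₀
        · rw [if_pos h'] at hx'
          rcases hx' with hx' | hx'
          · exact hx' (hx ▸ Set.mem_range_self s)
          · rw [Set.mem_singleton_iff] at hx hx'
            exact h (f.injective (hx.symm ▸ hx' : f s = f s₀))
        · rw [if_neg h'] at hx'
          rw [Set.mem_singleton_iff] at hx hx'
          exact hss (f.injective (hx.symm ▸ hx' : f s = f s'))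
  have hPne : P.Nonempty := ⟨_, hP0⟩
  -- the main identity about the infimum over correspondences
  have main : (⨅ (R : Set (S × X)) (_ : IsCorrespondence R), corrDistortion R)
      = L - alphaSup S X := by
    apply le_antisymm
    · -- upper bound: for every partition D, the correspondence R_D has distortion ≤ L - β D
      have step : ∀ D ∈ P, (⨅ (R : Set (S × X)) (_ : IsCorrespondence R), corrDistortion R)
          ≤ L - β D := by
        intro D hD
        set R : Set (S × X) := {p : S × X | p.2 ∈ D p.1} with hRdef
        have hcorr : IsCorrespondence R := by
          constructor
          · intro s
            obtain ⟨x, hx⟩ := hD.1 s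
            exact ⟨x, hx⟩
          · intro x
            have : x ∈ ⋃ i, D i := hD.2.1 ▸ Set.mem_univ x
            obtain ⟨s, hs⟩ := Set.mem_iUnion.mp this
            exact ⟨s, hs⟩
        refine le_trans (iInf₂_le R hcorr) (corrDist_le ?_)
        intro p hp q hq
        by_cases h : p.1 = q.1
        · rw [h, dist_self]
          have h1 : ENNReal.ofReal |0 - dist p.2 q.2| = edist p.2 q.2 := by
            rw [zero_sub, abs_neg, abs_of_nonneg dist_nonneg, edist_dist]
          rw [h1]
          -- edist ≤ diam ≤ L - β D since diam + β D ≤ diam + alphaSup ≤ L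
          refine le_trans ((hedist_le p.2 q.2).trans (le_of_eq hediam)) ?_
          refine (ENNReal.cancel_of_ne ?_).le_tsub_of_add_le_right ?_
          · exact fun hh => hAne (top_le_iff.mp (hh ▸ (le_iSup₂_of_le D hD le_rfl : β D ≤ alphaSup S X)))
          · refine le_trans (add_le_add_right ?_ _) hge
            exact le_iSup₂_of_le D hD le_rfl
        · rw [hS _ _ h]
          have hd : dist p.2 q.2 ≤ lam := hdist_le p.2 q.2
          rw [abs_of_nonneg (by linarith)]
          rw [ENNReal.ofReal_sub _ dist_nonneg, ← edist_dist]
          exact tsub_le_tsub_left (hβle D p.1 q.1 h p.2 hp q.2 hq) L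
      -- combine: L - alphaSup = ⨅ over partitions of (L - β D)
      have : Nonempty ↥P := hPne.to_subtype
      calc (⨅ (R : Set (S × X)) (_ : IsCorrespondence R), corrDistortion R)
          ≤ ⨅ D : ↥P, (L - β D.1) := le_iInf fun D => step D.1 D.2
        _ = L - ⨆ D : ↥P, β D.1 := (ENNReal.sub_iSup hLne).symm
        _ = L - alphaSup S X := by rw [hA, iSup_subtype']
    · -- lower bound
      refine le_iInf fun R => le_iInf fun hR => ?_
      by_cases hdisj : Pairwise (Function.onFun Disjoint fun s : S => {x : X | (s, x) ∈ R})
      · -- the fibers form a partition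
        set D : S → Set X := fun s => {x : X | (s, x) ∈ R} with hDdef
        have hDP : D ∈ P := by
          refine ⟨fun s => hR.1 s, ?_, hdisj⟩
          apply Set.eq_univ_of_forall
          intro x
          obtain ⟨s, hs⟩ := hR.2 x
          exact Set.mem_iUnion.mpr ⟨s, hs⟩
        have h1 : L - corrDistortion R ≤ β D := by
          refine le_iInf fun i => le_iInf fun j => le_iInf fun hij =>
            le_iInf fun x => le_iInf fun hx => le_iInf fun y => le_iInf fun hy => ?_
          rw [tsub_le_iff_right]
          have hmem1 : ((i, x) : S × X) ∈ R := hx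
          have hmem2 : ((j, y) : S × X) ∈ R := hy
          have hkey : ENNReal.ofReal (lam - dist x y) ≤ corrDistortion R := by
            refine le_trans ?_ (le_corrDist hmem1 hmem2)
            simp only
            rw [hS _ _ hij]
            exact ENNReal.ofReal_le_ofReal (le_abs_self _)
          calc L = ENNReal.ofReal (dist x y + (lam - dist x y)) := by ring_nf; rfl
            _ = ENNReal.ofReal (dist x y) + ENNReal.ofReal (lam - dist x y) :=
                ENNReal.ofReal_add dist_nonneg (by linarith [hdist_le x y])
            _ ≤ edist x y + corrDistortion R := by
                rw [edist_dist]; exact add_le_add_right hkey _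
        have h2 : L - corrDistortion R ≤ alphaSup S X :=
          h1.trans (le_iSup₂_of_le D hDP le_rfl)
        rw [tsub_le_iff_right] at h2 ⊢
        rwa [add_comm] at h2
      · -- two fibers intersect: distortion ≥ L
        rw [Pairwise] at hdisj
        push_neg at hdisj
        obtain ⟨s, s', hne, hnd⟩ := hdisj
        rw [Function.onFun, Set.not_disjoint_iff] at hnd
        obtain ⟨x, hx, hx'⟩ := hnd
        have hL_le : L ≤ corrDistortion R := by
          have := le_corrDist (R := R) (p := (s, x)) (q := (s', x)) hx hx'
          simp only at this
          rwa [hS _ _ hne, dist_self, sub_zero, abs_of_nonneg hlam.le] at this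
        exact le_trans tsub_le_self hL_le
  rw [ghDist, main, ENNReal.mul_div_cancel' (by norm_num) (by norm_num)]
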